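/- arXiv:1011.6071 — 2 statements merged into one kernel-verified Lean document; each statement's English description precedes it below -/
import Mathlib

section
/- With φ the sawtooth function and t_m the step function as above, for every x ∈ ℝ one has |φ(2^{2νm}(x + t_m(x))) - φ(2^{2νm} x)| = |2^{2νm} t_m(x)| = 1/2, since φ is affine with slope ±1 on each interval between consecutive integers and no integer lies between 2^{2νm}x and 2^{2νm}(x + t_m(x)). -/
/-- The sawtooth function: φ(x) = |x| on [-1,1], extended 2-periodically. -/
noncomputable def phi (x : ℝ) : ℝ := |x - 2 * round (x / 2)|

/-- The step function t_m: +2^{-2νm-1} if fract(2^{2νm}x) ∈ (0,1/2], else -2^{-2νm-1}. -/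
noncomputable def tstep (ν m : ℕ) (x : ℝ) : ℝ :=
  if Int.fract ((2 : ℝ) ^ (2 * ν * m) * x) ∈ Set.Ioc (0 : ℝ) (1 / 2)
  then (2 : ℝ) ^ (-(2 * (ν : ℤ) * (m : ℤ) + 1))
  else -(2 : ℝ) ^ (-(2 * (ν : ℤ) * (m : ℤ) + 1))

lemma fract_shift (z c : ℝ) : Int.fract (z + c) = Int.fract (Int.fract z + c) := by
  rw [show z + c = (⌊z⌋ : ℝ) + (Int.fract z + c) by unfold Int.fract; ring, Int.fract_intCast_add]

lemma phi_eq (x : ℝ) : phi x =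
    if Int.fract (x/2) < 1/2 then 2 * Int.fract (x/2) else 2 - 2 * Int.fract (x/2) := by
  have h0 := Int.fract_nonneg (x/2)
  have h1 := Int.fract_lt_one (x/2)
  have hfl : ⌊x/2 + 1/2⌋ = ⌊x/2⌋ + if Int.fract (x/2) < 1/2 then 0 else 1 := by
    rw [show x/2 + 1/2 = (⌊x/2⌋ : ℝ) + (Int.fract (x/2) + 1/2) by unfold Int.fract; ring,
      Int.floor_intCast_add]
    congr 1
    split_ifs with h
    · rw [Int.floor_eq_zero_iff]; constructor <;> simp <;> linarith
    · rw [Int.floor_eq_iff]; push_cast; constructor <;> linarith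
  unfold phi
  rw [round_eq, hfl]
  have hx : x = 2 * (⌊x/2⌋ : ℝ) + 2 * Int.fract (x/2) := by unfold Int.fract; ring
  split_ifs with h
  · rw [abs_of_nonneg (by push_cast; linarith)]; push_cast; linarith
  · rw [abs_of_nonpos (by push_cast; linarith)]; push_cast; linarith

set_option maxHeartbeats 1000000 in
theorem phi_middle_term (ν m : ℕ) (hν : 1 ≤ ν) (x : ℝ) :
    |phi ((2 : ℝ) ^ (2 * ν * m) * (x + tstep ν m x)) - phi ((2 : ℝ) ^ (2 * ν * m) * x)|
      = |(2 : ℝ) ^ (2 * ν * m) * tstep ν m x|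
    ∧ |(2 : ℝ) ^ (2 * ν * m) * tstep ν m x| = 1 / 2 := by
  have hpow : (2:ℝ) ^ (2*ν*m) * tstep ν m x
      = if Int.fract ((2:ℝ)^(2*ν*m) * x) ∈ Set.Ioc (0:ℝ) (1/2) then 1/2 else -(1/2) := by
    have h2 : (2:ℝ) ^ (2*ν*m) * (2:ℝ)^(-(2*(ν:ℤ)*(m:ℤ)+1)) = 1/2 := by
      rw [← zpow_natCast (2:ℝ) (2*ν*m), ← zpow_add₀ (two_ne_zero)]
      rw [show ((2*ν*m : ℕ) : ℤ) + (-(2*(ν:ℤ)*(m:ℤ)+1)) = -1 by push_cast; ring]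
      norm_num
    unfold tstep
    split_ifs with h
    · exact h2
    · rw [mul_neg, h2]
  set y := (2:ℝ)^(2*ν*m) * x with hy
  rw [show (2:ℝ)^(2*ν*m) * (x + tstep ν m x) = y + (2:ℝ)^(2*ν*m) * tstep ν m x by
    rw [hy]; ring, hpow]
  set v := Int.fract (y/2) with hv
  have hv0 : 0 ≤ v := Int.fract_nonneg _
  have hv1 : v < 1 := Int.fract_lt_one _
  have hfy : Int.fract y = if v < 1/2 then 2*v else 2*v - 1 := by
    rw [show y = ((2*⌊y/2⌋ : ℤ) : ℝ) + 2*v by rw [hv]; unfold Int.fract; push_cast; ring,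
      Int.fract_intCast_add]
    split_ifs with h
    · exact Int.fract_eq_self.mpr ⟨by linarith, by linarith⟩
    · conv_lhs => rw [show 2*v = ((1:ℤ) : ℝ) + (2*v - 1) by push_cast; ring, Int.fract_intCast_add]
      have h' := not_lt.mp h
      exact Int.fract_eq_self.mpr ⟨by linarith, by linarith⟩
  have hA : Int.fract (y/2 + 1/4) = if v + 1/4 < 1 then v + 1/4 else v - 3/4 := by
    rw [fract_shift, ← hv]
    split_ifs with h
    · exact Int.fract_eq_self.mpr ⟨by linarith, h⟩
    · rw [show v + 1/4 = ((1:ℤ) : ℝ) + (v - 3/4) by push_cast; ring, Int.fract_intCast_add]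
      exact Int.fract_eq_self.mpr ⟨by push_cast at h ⊢; linarith, by linarith⟩
  have hB : Int.fract (y/2 + -(1/4)) = if 1/4 ≤ v then v - 1/4 else v + 3/4 := by
    rw [fract_shift, ← hv]
    split_ifs with h
    · exact Int.fract_eq_self.mpr ⟨by linarith, by linarith⟩
    · rw [show v + -(1/4) = ((-1:ℤ) : ℝ) + (v + 3/4) by push_cast; ring, Int.fract_intCast_add]
      exact Int.fract_eq_self.mpr ⟨by linarith, by push_cast at h ⊢; linarith⟩
  by_cases hc : Int.fract y ∈ Set.Ioc (0:ℝ) (1/2)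
  · rw [if_pos hc]
    refine ⟨?_, by norm_num⟩
    rw [Set.mem_Ioc, hfy] at hc
    obtain ⟨hc1, hc2⟩ := hc
    rw [phi_eq, phi_eq, show (y + 1/2)/2 = y/2 + 1/4 by ring, hA, ← hv,
      show |(1:ℝ)/2| = 1/2 by norm_num]
    split_ifs at hc1 hc2 ⊢ <;>
      rw [abs_eq (by norm_num : (0:ℝ) ≤ 1/2)] <;>
      first
        | (left; linarith)
        | (right; linarith)
  · rw [if_neg hc]
    refine ⟨?_, by norm_num⟩
    rw [Set.mem_Ioc, hfy, not_and_or, not_lt, not_le] at hc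
    have hfy0 : (0:ℝ) ≤ if v < 1/2 then 2*v else 2*v - 1 := by rw [← hfy]; exact Int.fract_nonneg _
    rw [phi_eq, phi_eq, show (y + -(1/2))/2 = y/2 + -(1/4) by ring, hB, ← hv,
      show |(-(1/2) : ℝ)| = 1/2 by norm_num]
    rcases hc with hc | hc <;>
      split_ifs at hc hfy0 ⊢ <;>
      rw [abs_eq (by norm_num : (0:ℝ) ≤ 1/2)] <;>
      first
        | (left; linarith)
        | (right; linarith)
end

section
/- Let α ∈ (0,1), β ∈ (α,1], and ν ∈ ℕ with 2ν > 1/(1-α). Then for every x ∈ ℝ, limsup_{t→0} |K_{α,ν}(x+t) - K_{α,ν}(x)| / |t|^β = +∞. In particular, K_{α,ν} is at no point Hölder continuous of any exponent β > α. -/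
/-- The Knopp-type function K_{α,ν}. -/
noncomputable def Kfun (α : ℝ) (ν : ℕ) (x : ℝ) : ℝ :=
  ∑' k : ℕ, (2 : ℝ) ^ (-(2 * α * (ν : ℝ) * (k : ℝ))) * phi ((2 : ℝ) ^ (2 * ν * k) * x)

lemma two_abs_half (x : ℝ) (m : ℤ) : |x - 2 * m| = 2 * |x/2 - m| := by
  have h : x - 2*m = 2*(x/2 - m) := by ring
  rw [h, abs_mul, abs_two]

lemma phi_nonneg (x : ℝ) : 0 ≤ phi x := abs_nonneg _

lemma phi_le (x : ℝ) (m : ℤ) : phi x ≤ |x - 2 * m| := by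
  unfold phi
  rcases eq_or_ne m (round (x/2)) with rfl | hm
  · exact le_refl _
  · have h1 : |x/2 - round (x/2)| ≤ 1/2 := abs_sub_round (x/2)
    have h2 : (1 : ℝ) ≤ |(m : ℝ) - round (x/2)| := by
      have h : (1:ℤ) ≤ |m - round (x/2)| := Int.one_le_abs (sub_ne_zero.mpr hm)
      have := (@Int.cast_le ℝ _ _ _).mpr h
      push_cast at this; convert this using 2
    have h4 : |x/2 - (m:ℝ)| ≥ 1/2 := by
      have := abs_sub_abs_le_abs_sub ((m:ℝ) - round (x/2)) ((x/2) - round (x/2))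
      have h5 : |(m:ℝ) - round (x/2) - (x/2 - round (x/2))| = |x/2 - m| := by
        rw [show (m:ℝ) - round (x/2) - (x/2 - round (x/2)) = -(x/2 - m) by ring, abs_neg]
      rw [h5] at this
      linarith
    rw [two_abs_half, two_abs_half]
    linarith

lemma phi_le_one (x : ℝ) : phi x ≤ 1 := by
  have h1 : |x/2 - round (x/2)| ≤ 1/2 := abs_sub_round (x/2)
  unfold phi
  rw [two_abs_half]
  linarith

lemma phi_lipschitz (x y : ℝ) : |phi y - phi x| ≤ |y - x| := by
  have key : ∀ a b : ℝ, phi b ≤ |b - a| + phi a := by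
    intro a b
    calc phi b ≤ |b - 2 * round (a/2)| := phi_le b _
      _ ≤ |b - a| + |a - 2 * round (a/2)| := by
          have := abs_sub_le b a (2 * (round (a/2) : ℝ)); linarith
      _ = |b - a| + phi a := rfl
  rw [abs_sub_le_iff]
  constructor
  · have := key x y; linarith
  · have := key y x; rw [abs_sub_comm] at this; linarith

lemma phi_period (x : ℝ) (m : ℤ) : phi (x + 2 * m) = phi x := by
  unfold phi
  have h : (x + 2*m)/2 = x/2 + m := by ring
  rw [h, round_add_intCast]
  push_cast
  ring_nf

lemma phi_eq_even (j : ℤ) (x : ℝ) (h : x ∈ Set.Icc ((2*j : ℤ) : ℝ) ((2*j+1 : ℤ) : ℝ)) :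
    phi x = x - 2*j := by
  obtain ⟨h1, h2⟩ := h
  push_cast at h1 h2
  refine le_antisymm ?_ ?_
  · have := phi_le x j
    rw [abs_of_nonneg (by linarith)] at this
    exact this
  · unfold phi
    set r := round (x/2) with hr
    rcases le_or_gt r j with hle | hlt
    · have : (r:ℝ) ≤ j := by exact_mod_cast hle
      rw [abs_of_nonneg (by linarith)]; linarith
    · have : (j:ℝ) + 1 ≤ r := by exact_mod_cast hlt
      have hneg : x - 2*r ≤ 0 := by linarith
      rw [abs_of_nonpos hneg]; linarith

lemma phi_eq_odd (j : ℤ) (x : ℝ) (h : x ∈ Set.Icc ((2*j+1 : ℤ) : ℝ) ((2*j+2 : ℤ) : ℝ)) :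
    phi x = 2*j + 2 - x := by
  obtain ⟨h1, h2⟩ := h
  push_cast at h1 h2
  refine le_antisymm ?_ ?_
  · have := phi_le x (j+1)
    push_cast at this
    rw [abs_of_nonpos (by linarith)] at this
    calc phi x ≤ -(x - 2*((j:ℝ)+1)) := this
      _ = 2*j+2-x := by ring
  · unfold phi
    set r := round (x/2) with hr
    rcases le_or_gt r j with hle | hlt
    · have : (r:ℝ) ≤ j := by exact_mod_cast hle
      rw [abs_of_nonneg (by linarith)]; linarith
    · have : (j:ℝ) + 1 ≤ r := by exact_mod_cast hlt
      have hneg : x - 2*r ≤ 0 := by linarith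
      rw [abs_of_nonpos hneg]; linarith

lemma phi_sub_eq (m : ℤ) (a b : ℝ) (ha : a ∈ Set.Icc ((m:ℝ)) ((m:ℝ)+1))
    (hb : b ∈ Set.Icc ((m:ℝ)) ((m:ℝ)+1)) : |phi b - phi a| = |b - a| := by
  rcases Int.even_or_odd m with ⟨j, hj⟩ | ⟨j, hj⟩
  · subst hj
    have ha' : a ∈ Set.Icc ((2*j:ℤ):ℝ) ((2*j+1:ℤ):ℝ) := by
      push_cast at ha ⊢; constructor <;> [linarith [ha.1]; linarith [ha.2]]
    have hb' : b ∈ Set.Icc ((2*j:ℤ):ℝ) ((2*j+1:ℤ):ℝ) := by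
      push_cast at hb ⊢; constructor <;> [linarith [hb.1]; linarith [hb.2]]
    rw [phi_eq_even j a ha', phi_eq_even j b hb']
    ring_nf
  · subst hj
    have ha' : a ∈ Set.Icc ((2*j+1:ℤ):ℝ) ((2*j+2:ℤ):ℝ) := by
      push_cast at ha ⊢; constructor <;> [linarith [ha.1]; linarith [ha.2]]
    have hb' : b ∈ Set.Icc ((2*j+1:ℤ):ℝ) ((2*j+2:ℤ):ℝ) := by
      push_cast at hb ⊢; constructor <;> [linarith [hb.1]; linarith [hb.2]]
    rw [phi_eq_odd j a ha', phi_eq_odd j b hb']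
    rw [show (2*(j:ℝ)+2-b) - (2*(j:ℝ)+2-a) = -(b-a) by ring, abs_neg]

lemma phi_half_step (u : ℝ) : ∃ s : ℝ, (s = 1 ∨ s = -1) ∧ |phi (u + s/2) - phi u| = 1/2 := by
  set m := ⌊u⌋ with hm
  have h1 : (m:ℝ) ≤ u := Int.floor_le u
  have h2 : u < m + 1 := Int.lt_floor_add_one u
  by_cases hc : u ≤ m + 1/2
  · refine ⟨1, Or.inl rfl, ?_⟩
    have := phi_sub_eq m u (u + 1/2) ⟨h1, by linarith⟩ ⟨by linarith, by linarith⟩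
    rw [this]
    norm_num
  · refine ⟨-1, Or.inr rfl, ?_⟩
    push_neg at hc
    have := phi_sub_eq m u (u + (-1)/2) ⟨h1, by linarith⟩ ⟨by linarith, by linarith⟩
    rw [this]
    norm_num

lemma Kfun_eq (α : ℝ) (ν : ℕ) (y : ℝ) :
    Kfun α ν y = ∑' k : ℕ, ((2:ℝ) ^ (-(2*α*(ν:ℝ))))^k * phi (((2:ℝ)^(2*ν))^k * y) := by
  unfold Kfun
  apply tsum_congr
  intro k
  congr 1
  · rw [← Real.rpow_natCast ((2:ℝ) ^ (-(2*α*(ν:ℝ)))) k, ← Real.rpow_mul (by norm_num)]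
    ring_nf
  · rw [← pow_mul]

lemma ha_pos {α : ℝ} {ν : ℕ} : (0:ℝ) < (2:ℝ) ^ (-(2*α*(ν:ℝ))) :=
  Real.rpow_pos_of_pos (by norm_num) _

lemma ha_lt1 {α : ℝ} {ν : ℕ} (hα0 : 0 < α) (hν1 : 1 ≤ ν) : (2:ℝ) ^ (-(2*α*(ν:ℝ))) < 1 := by
  apply Real.rpow_lt_one_of_one_lt_of_neg (by norm_num)
  have : (1:ℝ) ≤ (ν:ℝ) := by exact_mod_cast hν1
  nlinarith

lemma Kfun_summable {α : ℝ} {ν : ℕ} (hα0 : 0 < α) (hν1 : 1 ≤ ν) (y : ℝ) :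
    Summable (fun k : ℕ => ((2:ℝ) ^ (-(2*α*(ν:ℝ))))^k * phi (((2:ℝ)^(2*ν))^k * y)) := by
  apply Summable.of_nonneg_of_le
    (g := fun k => ((2:ℝ) ^ (-(2*α*(ν:ℝ))))^k * phi (((2:ℝ)^(2*ν))^k * y))
    (f := fun k => ((2:ℝ) ^ (-(2*α*(ν:ℝ))))^k)
  · intro k
    exact mul_nonneg (pow_nonneg ha_pos.le _) (phi_nonneg _)
  · intro k
    nth_rewrite 2 [← mul_one (((2:ℝ) ^ (-(2*α*(ν:ℝ))))^k)]
    exact mul_le_mul_of_nonneg_left (phi_le_one _) (pow_nonneg ha_pos.le _)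
  · exact summable_geometric_of_lt_one ha_pos.le (ha_lt1 hα0 hν1)

lemma key_step {α : ℝ} {ν : ℕ} (hα0 : 0 < α) (hα1 : α < 1)
    (hν : 1 / (1 - α) < 2 * (ν : ℝ)) (x : ℝ) (n : ℕ) :
    ∃ t : ℝ, t ≠ 0 ∧ |t| = 1 / (2 * ((2:ℝ)^(2*ν))^n) ∧
      ((2:ℝ)^(-(2*α*(ν:ℝ))))^n *
        (((2:ℝ)^(-(2*α*(ν:ℝ))) * (2:ℝ)^(2*ν) - 2) /
          (2 * ((2:ℝ)^(-(2*α*(ν:ℝ))) * (2:ℝ)^(2*ν) - 1)))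
        ≤ |Kfun α ν (x + t) - Kfun α ν x| := by
  have h1α : (0:ℝ) < 1 - α := by linarith
  have hν1 : 1 ≤ ν := by
    rcases Nat.eq_zero_or_pos ν with h | h
    · exfalso; rw [h] at hν; simp at hν
      have : (0:ℝ) < 1/(1-α) := by positivity
      linarith
    · exact h
  set a : ℝ := (2:ℝ)^(-(2*α*(ν:ℝ))) with ha_def
  set b : ℝ := (2:ℝ)^(2*ν) with hb_def
  set A : ℝ := a * b with hA_def
  have hap : (0:ℝ) < a := ha_pos
  have hbp : (0:ℝ) < b := by positivity
  have hbnp : (0:ℝ) < b^n := pow_pos hbp n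
  have hbr : b = (2:ℝ)^(2*(ν:ℝ)) := by
    rw [hb_def, ← Real.rpow_natCast 2 (2*ν)]
    norm_num
  have hA2 : 2 < A := by
    have hA' : A = (2:ℝ)^(-(2*α*(ν:ℝ)) + 2*(ν:ℝ)) := by
      rw [hA_def, ha_def, hbr, ← Real.rpow_add (by norm_num)]
    rw [hA']
    have he : (1:ℝ) < -(2*α*(ν:ℝ)) + 2*(ν:ℝ) := by
      have h2 : 1 < 2*(ν:ℝ)*(1-α) := by
        rw [div_lt_iff₀ h1α] at hν; linarith
      nlinarith
    calc (2:ℝ) = (2:ℝ)^(1:ℝ) := (Real.rpow_one 2).symm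
      _ < _ := (Real.rpow_lt_rpow_left_iff (by norm_num)).mpr he
  have hA1 : (1:ℝ) < A - 1 := by linarith
  obtain ⟨s, hs, hstep⟩ := phi_half_step (b^n * x)
  have hs1 : |s| = 1 := by rcases hs with rfl | rfl <;> norm_num
  have hsne : s ≠ 0 := by rcases hs with rfl | rfl <;> norm_num
  refine ⟨s / (2*b^n), div_ne_zero hsne (by positivity), ?_, ?_⟩
  · rw [abs_div, hs1, abs_of_pos (by positivity)]
  set t : ℝ := s / (2*b^n) with ht_def
  have hta : |t| = 1/(2*b^n) := by rw [ht_def, abs_div, hs1, abs_of_pos (by positivity)]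
  set d : ℕ → ℝ := fun k => a^k * phi (b^k*(x+t)) - a^k * phi (b^k*x) with hd_def
  have hdsum : Summable d := (Kfun_summable hα0 hν1 (x+t)).sub (Kfun_summable hα0 hν1 x)
  have hKd : Kfun α ν (x+t) - Kfun α ν x = ∑' k, d k := by
    rw [Kfun_eq, Kfun_eq, ← Summable.tsum_sub (Kfun_summable hα0 hν1 (x+t)) (Kfun_summable hα0 hν1 x)]
  have hbnx : b^n*(x+t) = b^n*x + s/2 := by
    rw [ht_def]; field_simp
  have hdn : |d n| = a^n * (1/2) := by
    rw [hd_def]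
    simp only
    rw [← mul_sub, abs_mul, abs_of_nonneg (pow_nonneg hap.le n), hbnx, hstep]
  have hlip : ∀ k, |d k| ≤ A^k * (1/(2*b^n)) := by
    intro k
    rw [hd_def]
    simp only
    rw [← mul_sub, abs_mul, abs_of_nonneg (pow_nonneg hap.le k)]
    have h1 : |phi (b^k*(x+t)) - phi (b^k*x)| ≤ b^k * (1/(2*b^n)) := by
      have h2 := phi_lipschitz (b^k*x) (b^k*(x+t))
      have h3 : |b^k*(x+t) - b^k*x| = b^k * (1/(2*b^n)) := by
        rw [show b^k*(x+t) - b^k*x = b^k * t by ring, abs_mul,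
          abs_of_nonneg (pow_nonneg hbp.le k), hta]
      linarith [h3 ▸ h2]
    calc a^k * |phi (b^k*(x+t)) - phi (b^k*x)| ≤ a^k * (b^k * (1/(2*b^n))) :=
          mul_le_mul_of_nonneg_left h1 (pow_nonneg hap.le k)
      _ = A^k * (1/(2*b^n)) := by rw [hA_def, mul_pow]; ring
  have hdk0 : ∀ k, n < k → d k = 0 := by
    intro k hk
    obtain ⟨j, rfl⟩ : ∃ j, k = n + (j+1) := ⟨k - n - 1, by omega⟩
    set p : ℕ := 2*ν*(j+1) - 2 with hp_def
    have hexp : 2*ν*(j+1) = p + 2 := by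
      have : 2 ≤ 2*ν*(j+1) := by nlinarith [hν1]
      omega
    have hbt : b^(n+(j+1)) * t = s * (2 * (2:ℝ)^p) := by
      rw [ht_def, pow_add]
      have hb2 : (b:ℝ)^(j+1) = 2^(2*ν*(j+1)) := by rw [hb_def, ← pow_mul]
      field_simp
      rw [hb2, hexp, pow_add]
      ring
    have harg : b^(n+(j+1))*(x+t) = b^(n+(j+1))*x + s * (2 * (2:ℝ)^p) := by
      rw [mul_add, hbt]
    rw [hd_def]
    simp only
    rw [harg]
    rcases hs with rfl | rfl
    · have := phi_period (b^(n+(j+1))*x) (2^p)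
      push_cast at this
      rw [show b^(n+(j+1))*x + 1 * (2*(2:ℝ)^p) = b^(n+(j+1))*x + 2*(2:ℝ)^p by ring, this]
      ring
    · have := phi_period (b^(n+(j+1))*x) (-(2^p))
      push_cast at this
      rw [show b^(n+(j+1))*x + (-1) * (2*(2:ℝ)^p) = b^(n+(j+1))*x + 2*(-(2:ℝ)^p) by ring, this]
      ring
  have hsplit := Summable.tsum_eq_add_tsum_ite hdsum n
  set g : ℕ → ℝ := fun k => if k = n then 0 else d k with hg_def
  have hgsum : ∑' k, g k = ∑ k ∈ Finset.range (n+1), g k := by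
    apply tsum_eq_sum
    intro k hk
    rw [Finset.mem_range] at hk
    have hkn : n < k := by omega
    simp only [hg_def, if_neg (by omega : ¬ k = n)]
    exact hdk0 k hkn
  have hgbound : |∑' k, g k| ≤ (A^n/(A-1)) * (1/(2*b^n)) := by
    rw [hgsum]
    calc |∑ k ∈ Finset.range (n+1), g k| ≤ ∑ k ∈ Finset.range (n+1), |g k| :=
          Finset.abs_sum_le_sum_abs _ _
      _ = ∑ k ∈ Finset.range n, |g k| + |g n| := Finset.sum_range_succ _ n
      _ = ∑ k ∈ Finset.range n, |d k| := by
          simp only [hg_def, if_pos rfl, abs_zero, add_zero]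
          apply Finset.sum_congr rfl
          intro k hk
          rw [Finset.mem_range] at hk
          rw [if_neg (by omega)]
      _ ≤ ∑ k ∈ Finset.range n, A^k * (1/(2*b^n)) := Finset.sum_le_sum (fun k _ => hlip k)
      _ = (∑ k ∈ Finset.range n, A^k) * (1/(2*b^n)) := (Finset.sum_mul _ _ _).symm
      _ ≤ (A^n/(A-1)) * (1/(2*b^n)) := by
          apply mul_le_mul_of_nonneg_right _ (by positivity)
          rw [geom_sum_eq (by linarith : A ≠ 1) n]
          gcongr <;> linarith
  have hrw : (A^n/(A-1)) * (1/(2*b^n)) = a^n * (1/(2*(A-1))) := by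
    rw [hA_def, mul_pow]
    field_simp
  have hlow : a^n * (1/2) - a^n * (1/(2*(A-1))) ≤ |∑' k, d k| := by
    have h1 : d n = (∑' k, d k) - ∑' k, g k := by rw [hsplit]; ring
    have h2 : |d n| ≤ |∑' k, d k| + |∑' k, g k| := by
      rw [h1]; exact abs_sub _ _
    rw [hdn] at h2
    rw [hrw] at hgbound
    linarith
  rw [hKd]
  calc a^n * ((A-2)/(2*(A-1))) = a^n * (1/2) - a^n * (1/(2*(A-1))) := by
        field_simp; ring
    _ ≤ |∑' k, d k| := hlow

theorem Kfun_nowhere_improvable (α β : ℝ) (ν : ℕ)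
    (hα : α ∈ Set.Ioo (0 : ℝ) 1) (hβ : β ∈ Set.Ioc α 1) (hν : 1 / (1 - α) < 2 * (ν : ℝ))
    (x : ℝ) :
    (∀ C > (0 : ℝ), ∀ r > (0 : ℝ), ∃ t : ℝ, t ≠ 0 ∧ |t| < r ∧
      C < |Kfun α ν (x + t) - Kfun α ν x| / |t| ^ β)
    ∧ ¬ ∃ r > (0 : ℝ), ∃ C > (0 : ℝ), ∀ y ∈ Set.Icc (x - r) (x + r),
        |Kfun α ν y - Kfun α ν x| ≤ C * |y - x| ^ β := by
  obtain ⟨hα0, hα1⟩ := hα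
  obtain ⟨hβα, hβ1⟩ := hβ
  have h1α : (0:ℝ) < 1 - α := by linarith
  set a : ℝ := (2:ℝ)^(-(2*α*(ν:ℝ))) with ha_def
  set b : ℝ := (2:ℝ)^(2*ν) with hb_def
  set A : ℝ := a * b with hA_def
  set D : ℝ := (2:ℝ)^(2*(ν:ℝ)*(β-α)) with hD_def
  have hap : (0:ℝ) < a := ha_pos
  have hbp : (0:ℝ) < b := by positivity
  have hbr : b = (2:ℝ)^(2*(ν:ℝ)) := by
    rw [hb_def, ← Real.rpow_natCast 2 (2*ν)]
    norm_num
  have hνpos : (0:ℝ) < (ν:ℝ) := by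
    by_contra h
    push_neg at h
    have h0 : (ν:ℝ) = 0 := le_antisymm h (Nat.cast_nonneg ν)
    rw [h0] at hν
    have : (0:ℝ) < 1/(1-α) := by positivity
    linarith
  have hA2 : 2 < A := by
    have hA' : A = (2:ℝ)^(-(2*α*(ν:ℝ)) + 2*(ν:ℝ)) := by
      rw [hA_def, ha_def, hbr, ← Real.rpow_add (by norm_num)]
    rw [hA']
    have he : (1:ℝ) < -(2*α*(ν:ℝ)) + 2*(ν:ℝ) := by
      have h2 : 1 < 2*(ν:ℝ)*(1-α) := by
        rw [div_lt_iff₀ h1α] at hν; linarith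
      nlinarith
    calc (2:ℝ) = (2:ℝ)^(1:ℝ) := (Real.rpow_one 2).symm
      _ < _ := (Real.rpow_lt_rpow_left_iff (by norm_num)).mpr he
  have hc0 : (0:ℝ) < (A - 2)/(2*(A-1)) := by
    apply div_pos <;> linarith
  set c0 : ℝ := (A - 2)/(2*(A-1)) with hc0_def
  have hD1 : (1:ℝ) < D := by
    rw [hD_def]
    rw [show (1:ℝ) = (2:ℝ)^(0:ℝ) by simp]
    apply (Real.rpow_lt_rpow_left_iff (by norm_num)).mpr
    nlinarith
  have hDb : D ≤ b := by
    rw [hD_def, hbr]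
    apply (Real.rpow_le_rpow_left_iff (by norm_num)).mpr
    nlinarith
  have hDn : ∀ n : ℕ, a^n * ((b^n))^β = D^n := by
    intro n
    have e1 : a^n = (2:ℝ)^(-(2*α*(ν:ℝ)) * n) := by
      rw [← Real.rpow_natCast a n, ha_def, ← Real.rpow_mul (by norm_num)]
    have e2 : (b^n : ℝ) = (2:ℝ)^((2*(ν:ℝ)) * n) := by
      rw [hbr, ← Real.rpow_natCast ((2:ℝ)^(2*(ν:ℝ))) n, ← Real.rpow_mul (by norm_num)]
    have e3 : ((b^n : ℝ))^β = (2:ℝ)^((2*(ν:ℝ)) * n * β) := by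
      rw [e2, ← Real.rpow_mul (by norm_num)]
    have e4 : D^n = (2:ℝ)^((2*(ν:ℝ)*(β-α)) * n) := by
      rw [← Real.rpow_natCast D n, hD_def, ← Real.rpow_mul (by norm_num)]
    rw [e1, e3, e4, ← Real.rpow_add (by norm_num)]
    congr 1
    ring
  have part1 : ∀ C > (0 : ℝ), ∀ r > (0 : ℝ), ∃ t : ℝ, t ≠ 0 ∧ |t| < r ∧
      C < |Kfun α ν (x + t) - Kfun α ν x| / |t| ^ β := by
    intro C hC r hr
    obtain ⟨n, hn⟩ := pow_unbounded_of_one_lt (max (C/c0) (1/(2*r))) hD1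
    obtain ⟨t, ht0, hta, hineq⟩ := key_step hα0 hα1 hν x n
    rw [← hb_def] at hta hineq
    rw [← ha_def, ← hA_def, ← hc0_def] at hineq
    have hbnp : (0:ℝ) < b^n := pow_pos hbp n
    refine ⟨t, ht0, ?_, ?_⟩
    · have h1 : 1/(2*r) < D^n := lt_of_le_of_lt (le_max_right _ _) hn
      have h2 : D^n ≤ b^n := pow_le_pow_left₀ (by linarith : (0:ℝ) ≤ D) hDb n
      have h3 : 1/(2*r) < b^n := lt_of_lt_of_le h1 h2
      rw [hta, div_lt_iff₀ (by positivity)]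
      rw [div_lt_iff₀ (by positivity)] at h3
      nlinarith
    · have hYpos : (0:ℝ) < |t|^β := Real.rpow_pos_of_pos (by rw [hta]; positivity) β
      rw [lt_div_iff₀ hYpos]
      apply lt_of_lt_of_le _ hineq
      have hws : |t|^β = ((2*b^n)^β)⁻¹ := by
        rw [hta, one_div, Real.inv_rpow (by positivity)]
      rw [hws, ← div_eq_mul_inv, div_lt_iff₀ (Real.rpow_pos_of_pos (by positivity) β)]
      have hkey : C < c0 * D^n := by
        have h := lt_of_le_of_lt (le_max_left _ _) hn
        rw [div_lt_iff₀ hc0] at h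
        linarith [mul_comm (D^n) c0]
      have hmono : ((b^n : ℝ))^β ≤ (2*b^n)^β :=
        Real.rpow_le_rpow (by positivity) (by linarith) (by linarith)
      calc C < c0 * D^n := hkey
        _ = c0 * (a^n * ((b^n))^β) := by rw [hDn n]
        _ ≤ c0 * (a^n * (2*b^n)^β) := by
            apply mul_le_mul_of_nonneg_left _ hc0.le
            exact mul_le_mul_of_nonneg_left hmono (pow_nonneg hap.le n)
        _ = a^n * c0 * (2*b^n)^β := by ring
  refine ⟨part1, ?_⟩
  rintro ⟨r, hr, C, hC, hbound⟩
  obtain ⟨t, ht0, htr, hlt⟩ := part1 C hC r hr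
  have hy : x + t ∈ Set.Icc (x - r) (x + r) := by
    obtain ⟨h1, h2⟩ := abs_lt.mp htr
    constructor <;> [linarith; linarith]
  have hb2 := hbound (x+t) hy
  rw [show x + t - x = t by ring] at hb2
  have hYpos : (0:ℝ) < |t|^β := Real.rpow_pos_of_pos (abs_pos.mpr ht0) β
  rw [lt_div_iff₀ hYpos] at hlt
  linarith
end
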